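/- Let Φ, Ψ : [a,b] → ℝ (or ℂ) be square-integrable functions and define K(x,t) so that |K(x,t)| ≤ |Ψ(x)||Φ(t)| + |Φ(x)||Ψ(t)| for all a ≤ t ≤ x ≤ b. Then ∫ₐᵇ (|Φ(x)|² + |Ψ(x)|²) dx ≥ √2 · ( ∫ₐᵇ ∫ₐˣ |K(x,t)|² dt dx )^{1/2}. -/

import Mathlib

open MeasureTheory

theorem stmt_5 (a b : ℝ) (h0a : 0 ≤ a) (hab : a ≤ b) (Φ Ψ : ℝ → ℝ) (K : ℝ → ℝ → ℝ)
    (hΦ : IntegrableOn (fun x => |Φ x| ^ 2) (Set.Icc a b))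
    (hΨ : IntegrableOn (fun x => |Ψ x| ^ 2) (Set.Icc a b))
    (hΦm : AEStronglyMeasurable Φ (volume.restrict (Set.Icc a b)))
    (hΨm : AEStronglyMeasurable Ψ (volume.restrict (Set.Icc a b)))
    (hKm : Measurable fun p : ℝ × ℝ => K p.1 p.2)
    (hK : ∀ x t, a ≤ t → t ≤ x → x ≤ b →
      |K x t| ≤ |Ψ x| * |Φ t| + |Φ x| * |Ψ t|) :
    ∫ x in a..b, (|Φ x| ^ 2 + |Ψ x| ^ 2)
      ≥ Real.sqrt 2 * Real.sqrt (∫ x in a..b, (∫ t in a..x, |K x t| ^ 2)) := by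
  classical
  set ν : Measure ℝ := volume.restrict (Set.Ioc a b) with hνdef
  set F : ℝ → ENNReal := fun t => ENNReal.ofReal (|Φ t| ^ 2) with hFdef
  set G : ℝ → ENNReal := fun t => ENNReal.ofReal (|Ψ t| ^ 2) with hGdef
  have hΦi : IntegrableOn (fun x => |Φ x| ^ 2) (Set.Ioc a b) :=
    hΦ.mono_set Set.Ioc_subset_Icc_self
  have hΨi : IntegrableOn (fun x => |Ψ x| ^ 2) (Set.Ioc a b) :=
    hΨ.mono_set Set.Ioc_subset_Icc_self
  have hle : ν ≤ volume.restrict (Set.Icc a b) :=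
    Measure.restrict_mono Set.Ioc_subset_Icc_self le_rfl
  have hcont : Continuous fun x : ℝ => ENNReal.ofReal (|x| ^ 2) :=
    ENNReal.continuous_ofReal.comp (continuous_abs.pow 2)
  have hΦν : AEMeasurable Φ ν := ((hΦm.mono_measure hle).aemeasurable)
  have hΨν : AEMeasurable Ψ ν := ((hΨm.mono_measure hle).aemeasurable)
  have hFm : AEMeasurable F ν := hcont.measurable.comp_aemeasurable hΦν
  have hGm : AEMeasurable G ν := hcont.measurable.comp_aemeasurable hΨν
  set A : ℝ := ∫ x in Set.Ioc a b, |Φ x| ^ 2 with hAdef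
  set B : ℝ := ∫ x in Set.Ioc a b, |Ψ x| ^ 2 with hBdef
  have hA0 : 0 ≤ A := setIntegral_nonneg measurableSet_Ioc fun x _ => sq_nonneg _
  have hB0 : 0 ≤ B := setIntegral_nonneg measurableSet_Ioc fun x _ => sq_nonneg _
  have hLF : ∫⁻ t, F t ∂ν = ENNReal.ofReal A :=
    (ofReal_integral_eq_lintegral_ofReal hΦi
      (Filter.Eventually.of_forall fun x => sq_nonneg _)).symm
  have hLG : ∫⁻ t, G t ∂ν = ENNReal.ofReal B :=
    (ofReal_integral_eq_lintegral_ofReal hΨi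
      (Filter.Eventually.of_forall fun x => sq_nonneg _)).symm
  -- the key inequality: I ≤ 2 * A * B
  have key : (∫ x in a..b, (∫ t in a..x, |K x t| ^ 2)) ≤ 2 * (A * B) := by
    rw [intervalIntegral.integral_of_le hab]
    by_cases hgi : IntegrableOn (fun x => ∫ t in a..x, |K x t| ^ 2) (Set.Ioc a b)
    case neg => rw [integral_undef hgi]; positivity
    have hgnn : 0 ≤ᵐ[ν] fun x => ∫ t in a..x, |K x t| ^ 2 := by
      refine (ae_restrict_iff' measurableSet_Ioc).mpr ?_
      exact Filter.Eventually.of_forall fun x hx =>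
        intervalIntegral.integral_nonneg hx.1.le fun t _ => sq_nonneg _
    have hI : ENNReal.ofReal (∫ x in Set.Ioc a b, ∫ t in a..x, |K x t| ^ 2)
        = ∫⁻ x, ENNReal.ofReal (∫ t in a..x, |K x t| ^ 2) ∂ν :=
      ofReal_integral_eq_lintegral_ofReal hgi hgnn
    set h₂ : ℝ × ℝ → ENNReal := fun p => 2 * (G p.1 * F p.2 + F p.1 * G p.2) with hh₂
    set T : Set (ℝ × ℝ) := {p : ℝ × ℝ | p.2 ≤ p.1} with hT
    set T' : Set (ℝ × ℝ) := {p : ℝ × ℝ | p.1 ≤ p.2} with hT'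
    have hTm : MeasurableSet T := measurableSet_le measurable_snd measurable_fst
    have hT'm : MeasurableSet T' := measurableSet_le measurable_fst measurable_snd
    have hh₂m : AEMeasurable h₂ (ν.prod ν) :=
      ((hGm.comp_fst.mul hFm.comp_snd).add (hFm.comp_fst.mul hGm.comp_snd)).const_mul 2
    have step1 : ∀ x ∈ Set.Ioc a b, ENNReal.ofReal (∫ t in a..x, |K x t| ^ 2)
        ≤ ∫⁻ t, T.indicator h₂ (x, t) ∂ν := by
      intro x hx
      have hax : a ≤ x := hx.1.le
      have hmeq : ν.restrict (Set.Iic x) = volume.restrict (Set.Ioc a x) := by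
        rw [hνdef, Measure.restrict_restrict measurableSet_Iic]
        congr 1
        ext t
        simp only [Set.mem_inter_iff, Set.mem_Iic, Set.mem_Ioc]
        constructor
        · rintro ⟨h1, h2, h3⟩; exact ⟨h2, h1⟩
        · rintro ⟨h1, h2⟩; exact ⟨h2, h1, h2.trans hx.2⟩
      have hind : ∀ t, T.indicator h₂ (x, t) = (Set.Iic x).indicator (fun t => h₂ (x, t)) t := by
        intro t
        by_cases h : t ≤ x <;> simp [Set.indicator_apply, hT, h]
      calc ENNReal.ofReal (∫ t in a..x, |K x t| ^ 2)
          ≤ ∫⁻ t in Set.Ioc a x, ENNReal.ofReal (|K x t| ^ 2) := by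
            rw [intervalIntegral.integral_of_le hax]
            by_cases hki : IntegrableOn (fun t => |K x t| ^ 2) (Set.Ioc a x)
            · exact le_of_eq (ofReal_integral_eq_lintegral_ofReal hki
                (Filter.Eventually.of_forall fun t => sq_nonneg _))
            · rw [integral_undef hki]; simp
        _ ≤ ∫⁻ t in Set.Ioc a x, h₂ (x, t) := by
            apply lintegral_mono_ae
            rw [ae_restrict_iff' measurableSet_Ioc]
            refine Filter.Eventually.of_forall fun t ht => ?_
            have hb := hK x t ht.1.le ht.2 hx.2
            have h1 : |K x t| ^ 2 ≤ 2 * (|Ψ x| ^ 2 * |Φ t| ^ 2 + |Φ x| ^ 2 * |Ψ t| ^ 2) := by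
              nlinarith [abs_nonneg (K x t), abs_nonneg (Ψ x), abs_nonneg (Φ t),
                abs_nonneg (Φ x), abs_nonneg (Ψ t), sq_nonneg (|Ψ x| * |Φ t| - |Φ x| * |Ψ t|)]
            calc ENNReal.ofReal (|K x t| ^ 2)
                ≤ ENNReal.ofReal (2 * (|Ψ x| ^ 2 * |Φ t| ^ 2 + |Φ x| ^ 2 * |Ψ t| ^ 2)) :=
                  ENNReal.ofReal_le_ofReal h1
              _ = h₂ (x, t) := by
                  simp only [hh₂, hFdef, hGdef]
                  rw [ENNReal.ofReal_mul (by norm_num),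
                    ENNReal.ofReal_add (by positivity) (by positivity),
                    ENNReal.ofReal_mul (by positivity), ENNReal.ofReal_mul (by positivity)]
                  norm_num
        _ = ∫⁻ t, T.indicator h₂ (x, t) ∂ν := by
            rw [← hmeq, ← lintegral_indicator measurableSet_Iic]
            exact lintegral_congr fun t => (hind t).symm
    have hdiag : (ν.prod ν) {p : ℝ × ℝ | p.1 = p.2} = 0 := by
      have hm : MeasurableSet {p : ℝ × ℝ | p.1 = p.2} :=
        measurableSet_eq_fun measurable_fst measurable_snd
      rw [Measure.prod_apply hm]
      have h0 : ∀ x, ν (Prod.mk x ⁻¹' {p : ℝ × ℝ | p.1 = p.2}) = 0 := by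
        intro x
        have hpre : Prod.mk x ⁻¹' {p : ℝ × ℝ | p.1 = p.2} = {x} := by
          ext t; simp [eq_comm]
        rw [hpre]
        refine le_antisymm ?_ zero_le
        calc ν {x} ≤ volume {x} := Measure.le_iff'.mp Measure.restrict_le_self {x}
          _ = 0 := Real.volume_singleton
      simp [h0]
    have hswap : ∫⁻ p, T'.indicator h₂ p ∂ν.prod ν = ∫⁻ p, T.indicator h₂ p ∂ν.prod ν := by
      rw [← lintegral_prod_swap (fun p => T.indicator h₂ p)]
      refine lintegral_congr fun p => ?_
      by_cases h : p.1 ≤ p.2 <;>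
        simp only [Set.indicator_apply, hT, hT', Set.mem_setOf_eq, Prod.fst_swap,
          Prod.snd_swap, h, if_true, if_false, hh₂]
      ring
    have hsum : ∫⁻ p, T.indicator h₂ p ∂ν.prod ν + ∫⁻ p, T'.indicator h₂ p ∂ν.prod ν
        ≤ ∫⁻ p, h₂ p ∂ν.prod ν := by
      rw [← lintegral_add_left' (hh₂m.indicator hTm)]
      apply lintegral_mono_ae
      have hae : ∀ᵐ p ∂ν.prod ν, p ∉ {p : ℝ × ℝ | p.1 = p.2} :=
        measure_eq_zero_iff_ae_notMem.mp hdiag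
      filter_upwards [hae] with p hp
      rcases lt_or_gt_of_ne (fun h : p.1 = p.2 => hp h) with h | h
      · simp [Set.indicator_apply, hT, hT', not_le.mpr h, h.le]
      · simp [Set.indicator_apply, hT, hT', not_le.mpr h, h.le]
    have hprod : ∫⁻ p, h₂ p ∂ν.prod ν
        = 2 * (2 * (ENNReal.ofReal A * ENNReal.ofReal B)) := by
      simp only [hh₂]
      rw [lintegral_const_mul' 2 _ (by norm_num)]
      congr 1
      rw [lintegral_add_left' (f := fun p : ℝ × ℝ => G p.1 * F p.2) (hGm.comp_fst.mul hFm.comp_snd) _,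
        lintegral_prod_mul hGm hFm, lintegral_prod_mul hFm hGm, hLF, hLG]
      ring
    have hXle : ∫⁻ p, T.indicator h₂ p ∂ν.prod ν
        ≤ 2 * (ENNReal.ofReal A * ENNReal.ofReal B) := by
      refine (ENNReal.mul_le_mul_iff_right (a := 2) (by norm_num) (by norm_num)).mp ?_
      calc 2 * ∫⁻ p, T.indicator h₂ p ∂ν.prod ν
          = ∫⁻ p, T.indicator h₂ p ∂ν.prod ν + ∫⁻ p, T'.indicator h₂ p ∂ν.prod ν := by
            rw [hswap, two_mul]
        _ ≤ ∫⁻ p, h₂ p ∂ν.prod ν := hsum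
        _ = 2 * (2 * (ENNReal.ofReal A * ENNReal.ofReal B)) := hprod
    have hmain : ENNReal.ofReal (∫ x in Set.Ioc a b, ∫ t in a..x, |K x t| ^ 2)
        ≤ ENNReal.ofReal (2 * (A * B)) := by
      rw [hI]
      calc ∫⁻ x, ENNReal.ofReal (∫ t in a..x, |K x t| ^ 2) ∂ν
          ≤ ∫⁻ x, (∫⁻ t, T.indicator h₂ (x, t) ∂ν) ∂ν := by
            apply lintegral_mono_ae
            rw [ae_restrict_iff' measurableSet_Ioc]
            exact Filter.Eventually.of_forall step1
        _ = ∫⁻ p, T.indicator h₂ p ∂ν.prod ν := (lintegral_prod _ (hh₂m.indicator hTm)).symm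
        _ ≤ 2 * (ENNReal.ofReal A * ENNReal.ofReal B) := hXle
        _ = ENNReal.ofReal (2 * (A * B)) := by
            rw [ENNReal.ofReal_mul (by norm_num), ENNReal.ofReal_mul hA0]
            norm_num
    exact (ENNReal.ofReal_le_ofReal_iff (by positivity)).mp hmain
  -- finish
  have hS : (∫ x in a..b, (|Φ x| ^ 2 + |Ψ x| ^ 2)) = A + B := by
    rw [intervalIntegral.integral_of_le hab]
    exact integral_add hΦi hΨi
  rw [hS, ge_iff_le]
  calc Real.sqrt 2 * Real.sqrt (∫ x in a..b, (∫ t in a..x, |K x t| ^ 2))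
      ≤ Real.sqrt 2 * Real.sqrt (2 * (A * B)) := by
        exact mul_le_mul_of_nonneg_left (Real.sqrt_le_sqrt key) (Real.sqrt_nonneg 2)
    _ = 2 * (Real.sqrt A * Real.sqrt B) := by
        rw [← Real.sqrt_mul (by norm_num : (0:ℝ) ≤ 2)]
        have h : (2:ℝ) * (2 * (A * B)) = (2 * (Real.sqrt A * Real.sqrt B))^2 := by
          rw [mul_pow, mul_pow, Real.sq_sqrt hA0, Real.sq_sqrt hB0]; ring
        rw [h, Real.sqrt_sq (by positivity)]
    _ ≤ A + B := by
        nlinarith [sq_nonneg (Real.sqrt A - Real.sqrt B), Real.sq_sqrt hA0,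
          Real.sq_sqrt hB0, Real.sqrt_nonneg A, Real.sqrt_nonneg B]
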